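/- Let X ∈ M_n(F) be a nonzero matrix, and let J_X ⊆ M_n(F) be the smallest subset of M_n(F) containing X ∘ Y for every Y ∈ M_n(F) and closed under the operation a ↦ a ∘ Y for every Y ∈ M_n(F); equivalently, J_X is the set of all matrices of the form ((⋯(X ∘ Y₁) ∘ Y₂) ∘ ⋯) ∘ Y_k with k ≥ 1 and Y₁, …, Y_k ∈ M_n(F). Then J_X = M_n(F). -/

import Mathlib

open Matrix Finset

namespace Stmt3Aux

variable {F : Type*} [Field F] {n : ℕ}

def Qm (σ : Fin n → Fin n) (A : Finset (Fin n)) : Matrix (Fin n) (Fin n) F :=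
  Matrix.of fun i j => if i ∈ A ∧ j = σ i then 1 else 0

lemma Qm_apply (σ : Fin n → Fin n) (A : Finset (Fin n)) (i j : Fin n) :
    (Qm σ A : Matrix _ _ F) i j = if i ∈ A ∧ j = σ i then 1 else 0 := rfl

lemma Qm_mul (σ ρ : Fin n → Fin n) (A B : Finset (Fin n)) :
    (Qm σ A : Matrix _ _ F) * Qm ρ B
      = Qm (fun i => ρ (σ i)) (A.filter (fun i => σ i ∈ B)) := by
  ext i j
  rw [Matrix.mul_apply, Finset.sum_eq_single (σ i)]
  · simp only [Qm_apply, Finset.mem_filter]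
    by_cases hA : i ∈ A
    · by_cases hB : σ i ∈ B
      · by_cases hj : j = ρ (σ i) <;> simp [hA, hB, hj]
      · simp [hA, hB]
    · simp [hA]
  · intro k _ hk
    simp only [Qm_apply]
    rw [if_neg (by tauto), zero_mul]
  · intro h; exact absurd (Finset.mem_univ _) h

lemma Qm_congr {σ ρ : Fin n → Fin n} {A : Finset (Fin n)} (h : ∀ i ∈ A, σ i = ρ i) :
    (Qm σ A : Matrix _ _ F) = Qm ρ A := by
  ext i j
  simp only [Qm_apply]
  by_cases hA : i ∈ A
  · rw [h i hA]
  · simp [hA]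

lemma Qm_set_congr (σ : Fin n → Fin n) {A B : Finset (Fin n)} (h : A = B) :
    (Qm σ A : Matrix _ _ F) = Qm σ B := by rw [h]

lemma Qm_union {A B : Finset (Fin n)} (h : Disjoint A B) (σ : Fin n → Fin n) :
    (Qm σ (A ∪ B) : Matrix _ _ F) = Qm σ A + Qm σ B := by
  ext i j
  simp only [Qm_apply, Matrix.add_apply, Finset.mem_union]
  by_cases hA : i ∈ A
  · have hB : i ∉ B := Finset.disjoint_left.mp h hA
    by_cases hj : j = σ i <;> simp [hA, hB, hj]
  · by_cases hB : i ∈ B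
    · by_cases hj : j = σ i <;> simp [hA, hB, hj]
    · simp [hA, hB]

lemma Qm_empty (σ : Fin n → Fin n) : (Qm σ ∅ : Matrix _ _ F) = 0 := by
  ext i j; simp [Qm_apply]

lemma Qm_id_univ : (Qm id Finset.univ : Matrix (Fin n) (Fin n) F) = 1 := by
  ext i j
  simp only [Qm_apply, Matrix.one_apply, Finset.mem_univ, true_and, id]
  by_cases h : i = j <;> simp [h, eq_comm]

lemma mul_vmv (A : Matrix (Fin n) (Fin n) F) (u v : Fin n → F) :
    A * vecMulVec u v = vecMulVec (A *ᵥ u) v := by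
  ext i j
  rw [Matrix.mul_apply]
  simp only [vecMulVec_apply, mulVec, dotProduct]
  rw [Finset.sum_mul]
  exact Finset.sum_congr rfl fun k _ => by ring

lemma vmv_mul (A : Matrix (Fin n) (Fin n) F) (u v : Fin n → F) :
    vecMulVec u v * A = vecMulVec u (v ᵥ* A) := by
  ext i j
  rw [Matrix.mul_apply]
  simp only [vecMulVec_apply, vecMul, dotProduct]
  rw [Finset.mul_sum]
  exact Finset.sum_congr rfl fun k _ => by ring

lemma vmv_mul_vmv (u v w z : Fin n → F) :
    vecMulVec u v * vecMulVec w z = (v ⬝ᵥ w) • vecMulVec u z := by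
  ext i j
  rw [Matrix.mul_apply]
  simp only [vecMulVec_apply, Matrix.smul_apply, smul_eq_mul, dotProduct]
  rw [Finset.sum_mul]
  exact Finset.sum_congr rfl fun k _ => by ring

lemma vmv_add_left (u u' v : Fin n → F) :
    vecMulVec (u + u') v = vecMulVec u v + vecMulVec u' v := by
  ext i j; simp [vecMulVec_apply, add_mul]

lemma vmv_smul_left (c : F) (u v : Fin n → F) :
    vecMulVec (c • u) v = c • vecMulVec u v := by
  ext i j; simp [vecMulVec_apply, mul_assoc]

lemma vmv_single_single (t : Fin n) :
    vecMulVec (Pi.single t (1:F)) (Pi.single t 1) = Qm id {t} := by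
  ext i j
  simp only [vecMulVec_apply, Qm_apply, Pi.single_apply, Finset.mem_singleton, id]
  by_cases hi : i = t
  · subst hi
    by_cases hj : j = i <;> simp [hj, eq_comm]
  · simp [hi, Ne.symm, fun h => hi h]


lemma pairing {A B : Finset (Fin n)} (hd : Disjoint A B) (hcard : A.card = B.card) :
    ∃ π : Fin n → Fin n, (∀ x ∈ A, π x ∈ B) ∧ (∀ x ∈ B, π x ∈ A) ∧
      (∀ x ∈ A ∪ B, π (π x) = x) := by
  classical
  let e := Finset.equivOfCardEq hcard
  refine ⟨fun x => if h : x ∈ A then (e ⟨x, h⟩ : Fin n) else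
      if h : x ∈ B then (e.symm ⟨x, h⟩ : Fin n) else x, ?_, ?_, ?_⟩
  · intro x hx
    simp only [dif_pos hx]
    exact (e ⟨x, hx⟩).2
  · intro x hx
    have hxA : x ∉ A := Finset.disjoint_right.mp hd hx
    simp only [dif_neg hxA, dif_pos hx]
    exact (e.symm ⟨x, hx⟩).2
  · intro x hx
    rcases Finset.mem_union.mp hx with hA | hB
    · have h1 : (e ⟨x, hA⟩ : Fin n) ∈ B := (e ⟨x, hA⟩).2
      have h2 : (e ⟨x, hA⟩ : Fin n) ∉ A := Finset.disjoint_right.mp hd h1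
      simp only [dif_pos hA, dif_neg h2, dif_pos h1]
      have : (⟨(e ⟨x, hA⟩ : Fin n), h1⟩ : {y // y ∈ B}) = e ⟨x, hA⟩ := rfl
      rw [this, Equiv.symm_apply_apply]
    · have hxA : x ∉ A := Finset.disjoint_right.mp hd hB
      have h1 : (e.symm ⟨x, hB⟩ : Fin n) ∈ A := (e.symm ⟨x, hB⟩).2
      simp only [dif_neg hxA, dif_pos hB, dif_pos h1]
      have : (⟨(e.symm ⟨x, hB⟩ : Fin n), h1⟩ : {y // y ∈ A}) = e.symm ⟨x, hB⟩ := rfl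
      rw [this, Equiv.apply_symm_apply]

lemma grow (h2 : (2:F) ≠ 0) {S : Set (Matrix (Fin n) (Fin n) F)}
    (hstep : ∀ a ∈ S, ∀ Y, (2:F)⁻¹ • (a * Y + Y * a) ∈ S) :
    ∀ (k : ℕ) (T : Finset (Fin n)), T.Nonempty → n - T.card ≤ k →
      (∃ γ : F, γ ≠ 0 ∧ γ • (Qm id T : Matrix (Fin n) (Fin n) F) ∈ S) →
      ∃ T' : Finset (Fin n), n < 2 * T'.card ∧
        ∃ γ : F, γ ≠ 0 ∧ γ • (Qm id T' : Matrix (Fin n) (Fin n) F) ∈ S := by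
  intro k
  induction k with
  | zero =>
    intro T hT hk hγ
    refine ⟨T, ?_, hγ⟩
    have h1 : 1 ≤ T.card := Finset.card_pos.mpr hT
    have hle : T.card ≤ n := le_trans (Finset.card_le_univ T) (by simp)
    omega
  | succ k ih =>
    intro T hT hk hγ
    by_cases hbig : n < 2 * T.card
    · exact ⟨T, hbig, hγ⟩
    push_neg at hbig
    have h1 : 1 ≤ T.card := Finset.card_pos.mpr hT
    have hTc : T.card ≤ Tᶜ.card := by
      have hcc : Tᶜ.card = Fintype.card (Fin n) - T.card := Finset.card_compl T
      have hfc : Fintype.card (Fin n) = n := Fintype.card_fin n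
      omega
    obtain ⟨U, hUsub, hUcard⟩ := Finset.exists_subset_card_eq hTc
    have hd : Disjoint T U := Finset.disjoint_left.mpr
      (fun x hxT hxU => (Finset.mem_compl.mp (hUsub hxU)) hxT)
    obtain ⟨π, hπT, hπU, hππ⟩ := pairing hd hUcard.symm
    set a : Matrix (Fin n) (Fin n) F := Qm π (T ∪ U) with ha
    have hDa : (Qm id T : Matrix (Fin n) (Fin n) F) * a = Qm π T := by
      rw [Qm_mul]
      have hfil : T.filter (fun i => id i ∈ T ∪ U) = T :=
        Finset.filter_true_of_mem (fun x hx => Finset.mem_union_left _ hx)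
      rw [hfil]
      rfl
    have haD : a * (Qm id T : Matrix (Fin n) (Fin n) F) = Qm π U := by
      rw [Qm_mul]
      have hfil : (T ∪ U).filter (fun i => π i ∈ T) = U := by
        ext x
        simp only [Finset.mem_filter, Finset.mem_union]
        constructor
        · rintro ⟨hx | hx, hπ⟩
          · exact absurd hπ (Finset.disjoint_right.mp hd (hπT x hx))
          · exact hx
        · intro hx; exact ⟨Or.inr hx, hπU x hx⟩
      rw [hfil]
      rfl
    obtain ⟨γ, hγ0, hγS⟩ := hγ
    have key : (2:F)⁻¹ • ((γ • (Qm id T : Matrix (Fin n) (Fin n) F)) * ((2*γ⁻¹) • a)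
        + ((2*γ⁻¹) • a) * (γ • (Qm id T : Matrix (Fin n) (Fin n) F))) = a := by
      rw [Matrix.smul_mul, Matrix.mul_smul, Matrix.smul_mul, Matrix.mul_smul, hDa, haD,
        ha, Qm_union hd]
      match_scalars <;> field_simp <;> norm_num
    have haS : a ∈ S := key ▸ hstep _ hγS _
    have haa : a * a = Qm id (T ∪ U) := by
      rw [Qm_mul]
      have hfil : (T ∪ U).filter (fun i => π i ∈ T ∪ U) = T ∪ U :=
        Finset.filter_true_of_mem (fun x hx => by
          rcases Finset.mem_union.mp hx with h | h
          · exact Finset.mem_union_right _ (hπT x h)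
          · exact Finset.mem_union_left _ (hπU x h))
      rw [hfil]
      exact Qm_congr (fun i hi => hππ i hi)
    have key2 : (2:F)⁻¹ • (a * a + a * a) = Qm id (T ∪ U) := by
      rw [haa]
      match_scalars <;> field_simp <;> norm_num
    have hS2 : (Qm id (T ∪ U) : Matrix (Fin n) (Fin n) F) ∈ S := key2 ▸ hstep _ haS _
    have hcardU : (T ∪ U).card = T.card + U.card := Finset.card_union_of_disjoint hd
    exact ih (T ∪ U) (hT.mono Finset.subset_union_left) (by omega)
      ⟨1, one_ne_zero, by simpa using hS2⟩

lemma Qm_eq_of (σ ρ : Fin n → Fin n) {A B : Finset (Fin n)}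
    (hAB : A = B) (h : ∀ i ∈ B, σ i = ρ i) : (Qm σ A : Matrix (Fin n) (Fin n) F) = Qm ρ B := by
  subst hAB; exact Qm_congr h

lemma finish (h2 : (2:F) ≠ 0) {S : Set (Matrix (Fin n) (Fin n) F)}
    (hstep : ∀ a ∈ S, ∀ Y, (2:F)⁻¹ • (a * Y + Y * a) ∈ S)
    (T : Finset (Fin n)) (hbig : n < 2 * T.card)
    (γ : F) (hγ0 : γ ≠ 0) (hγS : γ • (Qm id T : Matrix (Fin n) (Fin n) F) ∈ S)
    (M : Matrix (Fin n) (Fin n) F) : M ∈ S := by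
  classical
  have hCc : Tᶜ.card ≤ T.card := by
    have hcc : Tᶜ.card = Fintype.card (Fin n) - T.card := Finset.card_compl T
    have hfc : Fintype.card (Fin n) = n := Fintype.card_fin n
    have hle : T.card ≤ n := le_trans (Finset.card_le_univ T) (by simp)
    omega
  obtain ⟨U, hUsub, hUcard⟩ := Finset.exists_subset_card_eq hCc
  have hdCT : Disjoint Tᶜ T := Finset.disjoint_left.mpr
    (fun x hxC hxT => (Finset.mem_compl.mp hxC) hxT)
  have hdCU : Disjoint Tᶜ U := Finset.disjoint_left.mpr
    (fun x hxC hxU => (Finset.mem_compl.mp hxC) (hUsub hxU))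
  obtain ⟨π, hπC, hπU, hππ⟩ := pairing hdCU hUcard.symm
  -- products
  have eDD : (Qm id T : Matrix (Fin n) (Fin n) F) * Qm id T = Qm id T := by
    rw [Qm_mul]
    exact Qm_eq_of _ _ (Finset.filter_true_of_mem (fun x hx => hx)) (fun i _ => rfl)
  have eDU : (Qm id T : Matrix (Fin n) (Fin n) F) * Qm id U = Qm id U := by
    rw [Qm_mul]
    refine Qm_eq_of _ _ ?_ (fun i _ => rfl)
    ext x; simp only [Finset.mem_filter, id]
    exact ⟨fun h => h.2, fun h => ⟨hUsub h, h⟩⟩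
  have eDqU : (Qm id T : Matrix (Fin n) (Fin n) F) * Qm π U = Qm π U := by
    rw [Qm_mul]
    refine Qm_eq_of _ _ ?_ (fun i _ => rfl)
    ext x; simp only [Finset.mem_filter, id]
    exact ⟨fun h => h.2, fun h => ⟨hUsub h, h⟩⟩
  have eDqC : (Qm id T : Matrix (Fin n) (Fin n) F) * Qm π Tᶜ = 0 := by
    rw [Qm_mul]
    have hfil : T.filter (fun i => id i ∈ Tᶜ) = ∅ := by
      ext x; simp only [Finset.mem_filter, Finset.mem_compl, id, Finset.notMem_empty,
        iff_false, not_and]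
      exact fun hx hc => hc hx
    rw [hfil, Qm_empty]
  have eDC0 : (Qm id T : Matrix (Fin n) (Fin n) F) * Qm id Tᶜ = 0 := by
    rw [Qm_mul]
    have hfil : T.filter (fun i => id i ∈ Tᶜ) = ∅ := by
      ext x; simp only [Finset.mem_filter, Finset.mem_compl, id, Finset.notMem_empty,
        iff_false, not_and]
      exact fun hx hc => hc hx
    rw [hfil, Qm_empty]
  have eqUD : (Qm π U : Matrix (Fin n) (Fin n) F) * Qm id T = 0 := by
    rw [Qm_mul]
    have hfil : U.filter (fun i => π i ∈ T) = ∅ := by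
      ext x; simp only [Finset.mem_filter, Finset.notMem_empty, iff_false, not_and]
      exact fun hx hc => (Finset.mem_compl.mp (hπU x hx)) hc
    rw [hfil, Qm_empty]
  have eqUDU : (Qm π U : Matrix (Fin n) (Fin n) F) * Qm id U = 0 := by
    rw [Qm_mul]
    have hfil : U.filter (fun i => π i ∈ U) = ∅ := by
      ext x; simp only [Finset.mem_filter, Finset.notMem_empty, iff_false, not_and]
      exact fun hx hc => (Finset.mem_compl.mp (hπU x hx)) (hUsub hc)
    rw [hfil, Qm_empty]
  have eqUqU : (Qm π U : Matrix (Fin n) (Fin n) F) * Qm π U = 0 := by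
    rw [Qm_mul]
    have hfil : U.filter (fun i => π i ∈ U) = ∅ := by
      ext x; simp only [Finset.mem_filter, Finset.notMem_empty, iff_false, not_and]
      exact fun hx hc => (Finset.mem_compl.mp (hπU x hx)) (hUsub hc)
    rw [hfil, Qm_empty]
  have eqUqC : (Qm π U : Matrix (Fin n) (Fin n) F) * Qm π Tᶜ = Qm id U := by
    rw [Qm_mul]
    refine Qm_eq_of _ _ ?_ (fun i hi => hππ i (Finset.mem_union_right _ hi))
    ext x; simp only [Finset.mem_filter]
    exact ⟨fun h => h.1, fun h => ⟨h, hπU x h⟩⟩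
  have eqUDC : (Qm π U : Matrix (Fin n) (Fin n) F) * Qm id Tᶜ = Qm π U := by
    rw [Qm_mul]
    refine Qm_eq_of _ _ ?_ (fun i _ => rfl)
    ext x; simp only [Finset.mem_filter]
    exact ⟨fun h => h.1, fun h => ⟨h, hπU x h⟩⟩
  have eqCD : (Qm π Tᶜ : Matrix (Fin n) (Fin n) F) * Qm id T = Qm π Tᶜ := by
    rw [Qm_mul]
    refine Qm_eq_of _ _ ?_ (fun i _ => rfl)
    ext x; simp only [Finset.mem_filter]
    exact ⟨fun h => h.1, fun h => ⟨h, hUsub (hπC x h)⟩⟩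
  have eqCDU : (Qm π Tᶜ : Matrix (Fin n) (Fin n) F) * Qm id U = Qm π Tᶜ := by
    rw [Qm_mul]
    refine Qm_eq_of _ _ ?_ (fun i _ => rfl)
    ext x; simp only [Finset.mem_filter]
    exact ⟨fun h => h.1, fun h => ⟨h, hπC x h⟩⟩
  have eqCqU : (Qm π Tᶜ : Matrix (Fin n) (Fin n) F) * Qm π U = Qm id Tᶜ := by
    rw [Qm_mul]
    refine Qm_eq_of _ _ ?_ (fun i hi => hππ i (Finset.mem_union_left _ hi))
    ext x; simp only [Finset.mem_filter]
    exact ⟨fun h => h.1, fun h => ⟨h, hπC x h⟩⟩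
  have eqCqC : (Qm π Tᶜ : Matrix (Fin n) (Fin n) F) * Qm π Tᶜ = 0 := by
    rw [Qm_mul]
    have hfil : Tᶜ.filter (fun i => π i ∈ Tᶜ) = ∅ := by
      ext x; simp only [Finset.mem_filter, Finset.notMem_empty, iff_false, not_and]
      exact fun hx hc => (Finset.mem_compl.mp hc) (hUsub (hπC x hx))
    rw [hfil, Qm_empty]
  have eqCDC : (Qm π Tᶜ : Matrix (Fin n) (Fin n) F) * Qm id Tᶜ = 0 := by
    rw [Qm_mul]
    have hfil : Tᶜ.filter (fun i => π i ∈ Tᶜ) = ∅ := by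
      ext x; simp only [Finset.mem_filter, Finset.notMem_empty, iff_false, not_and]
      exact fun hx hc => (Finset.mem_compl.mp hc) (hUsub (hπC x hx))
    rw [hfil, Qm_empty]
  have eone : (Qm id T : Matrix (Fin n) (Fin n) F) + Qm id Tᶜ = 1 := by
    rw [← Qm_union (Finset.disjoint_left.mpr (fun x hxT hxC => (Finset.mem_compl.mp hxC) hxT)),
      Finset.union_compl, Qm_id_univ]
  -- reach v
  have hvS : ((Qm id T : Matrix (Fin n) (Fin n) F)
      + (2:F)⁻¹ • (Qm π U + Qm π Tᶜ)) ∈ S := by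
    have key : (2:F)⁻¹ • ((γ • (Qm id T : Matrix (Fin n) (Fin n) F)) *
        (γ⁻¹ • (Qm id T + (Qm π U + Qm π Tᶜ)))
        + (γ⁻¹ • (Qm id T + (Qm π U + Qm π Tᶜ))) * (γ • (Qm id T : Matrix (Fin n) (Fin n) F)))
        = Qm id T + (2:F)⁻¹ • (Qm π U + Qm π Tᶜ) := by
      rw [Matrix.smul_mul, Matrix.mul_smul, Matrix.smul_mul, Matrix.mul_smul,
        mul_add, mul_add, add_mul, add_mul, eDD, eDqU, eDqC, eqUD, eqCD]
      match_scalars <;> field_simp <;> ring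
    exact key ▸ hstep _ hγS _
  -- v * w = 1
  have hvw : ((Qm id T : Matrix (Fin n) (Fin n) F) + (2:F)⁻¹ • (Qm π U + Qm π Tᶜ)) *
      (Qm id T - Qm id U + (2:F) • (Qm π U + Qm π Tᶜ) - (4:F) • Qm id Tᶜ) = 1 := by
    simp only [mul_add, add_mul, mul_sub, sub_mul, Matrix.smul_mul, Matrix.mul_smul,
      eDD, eDU, eDqU, eDqC, eDC0, eqUD, eqUDU, eqUqU, eqUqC, eqUDC,
      eqCD, eqCDU, eqCqU, eqCqC, eqCDC, mul_zero, zero_mul, smul_zero,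
      add_zero, zero_add]
    rw [← eone]
    match_scalars <;> field_simp <;> ring
  have hwv : (Qm id T - Qm id U + (2:F) • (Qm π U + Qm π Tᶜ) - (4:F) • Qm id Tᶜ) *
      ((Qm id T : Matrix (Fin n) (Fin n) F) + (2:F)⁻¹ • (Qm π U + Qm π Tᶜ)) = 1 :=
    mul_eq_one_comm.mp hvw
  have honeS : (1 : Matrix (Fin n) (Fin n) F) ∈ S := by
    have key : (2:F)⁻¹ • (((Qm id T : Matrix (Fin n) (Fin n) F) + (2:F)⁻¹ • (Qm π U + Qm π Tᶜ)) *
        (Qm id T - Qm id U + (2:F) • (Qm π U + Qm π Tᶜ) - (4:F) • Qm id Tᶜ)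
        + (Qm id T - Qm id U + (2:F) • (Qm π U + Qm π Tᶜ) - (4:F) • Qm id Tᶜ) *
        ((Qm id T : Matrix (Fin n) (Fin n) F) + (2:F)⁻¹ • (Qm π U + Qm π Tᶜ)))
        = (1 : Matrix (Fin n) (Fin n) F) := by
      rw [hvw, hwv]
      match_scalars <;> field_simp <;> norm_num
    exact key ▸ hstep _ hvS _
  have keyM : (2:F)⁻¹ • ((1 : Matrix (Fin n) (Fin n) F) * M + M * 1) = M := by
    rw [one_mul, mul_one]
    match_scalars <;> field_simp <;> norm_num
  exact keyM ▸ hstep _ honeS _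

section start
variable {S : Set (Matrix (Fin n) (Fin n) F)} {X : Matrix (Fin n) (Fin n) F}

lemma start (h2 : (2:F) ≠ 0)
    (hbase : ∀ Y, (2:F)⁻¹ • (X * Y + Y * X) ∈ S)
    (hstep : ∀ a ∈ S, ∀ Y, (2:F)⁻¹ • (a * Y + Y * a) ∈ S)
    (i j q : Fin n) (hc : X i j ≠ 0) (hqj : q ≠ j) :
    ∃ γ : F, γ ≠ 0 ∧ γ • (Qm id ({j, q} : Finset (Fin n)) : Matrix (Fin n) (Fin n) F) ∈ S := by
  classical
  have h4 : (4:F) ≠ 0 := by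
    have e : (4:F) = 2 * 2 := by norm_num
    rw [e]; exact mul_ne_zero h2 h2
  have h8 : (8:F) ≠ 0 := by
    have e : (8:F) = 2 * 4 := by norm_num
    rw [e]; exact mul_ne_zero h2 h4
  have h16 : (16:F) ≠ 0 := by
    have e : (16:F) = 2 * 8 := by norm_num
    rw [e]; exact mul_ne_zero h2 h8
  have hsjq : (Pi.single j 1 : Fin n → F) q = 0 := Pi.single_eq_of_ne hqj 1
  have hsqj : (Pi.single q 1 : Fin n → F) j = 0 := Pi.single_eq_of_ne (Ne.symm hqj) 1
  -- step 1 : g ∈ S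
  have hgS : (2:F)⁻¹ • (vecMulVec (X *ᵥ Pi.single j 1) (Pi.single j 1)
      + vecMulVec (Pi.single j 1) (Pi.single j 1 ᵥ* X)) ∈ S := by
    have := hbase (vecMulVec (Pi.single j 1) (Pi.single j 1))
    rwa [mul_vmv, vmv_mul] at this
  set u : Fin n → F := X *ᵥ Pi.single j 1 with hu
  set w : Fin n → F := Pi.single j 1 ᵥ* X with hw
  set u' : Fin n → F := u + w j • (Pi.single j 1 : Fin n → F) with hu'
  -- step 2 : h ∈ S
  have hhS : (4:F)⁻¹ • (vecMulVec u' (Pi.single q 1)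
      + u q • vecMulVec (Pi.single j 1) (Pi.single j 1)) ∈ S := by
    have key : (2:F)⁻¹ • (((2:F)⁻¹ • (vecMulVec u (Pi.single j 1) + vecMulVec (Pi.single j 1) w))
          * vecMulVec (Pi.single j 1) (Pi.single q 1)
        + vecMulVec (Pi.single j 1) (Pi.single q 1)
          * ((2:F)⁻¹ • (vecMulVec u (Pi.single j 1) + vecMulVec (Pi.single j 1) w)))
        = (4:F)⁻¹ • (vecMulVec u' (Pi.single q 1)
            + u q • vecMulVec (Pi.single j 1) (Pi.single j 1)) := by
      simp only [Matrix.smul_mul, Matrix.mul_smul, add_mul, mul_add, vmv_mul_vmv,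
        hu', vmv_add_left, vmv_smul_left, dotProduct_single, single_dotProduct,
        Pi.single_eq_same, hsjq, hsqj, one_mul, mul_one, mul_zero, zero_mul, zero_smul,
        smul_zero, add_zero, zero_add]
      match_scalars <;> (field_simp [h2,h4,h8,h16]; try ring; try simp)
    exact key ▸ hstep _ hgS _
  -- step 3 : r ∈ S
  set v0 : Fin n → F := u' + u' q • (Pi.single q 1 : Fin n → F) with hv0
  have hrS : (8:F)⁻¹ • vecMulVec v0 (Pi.single q 1) ∈ S := by
    have key : (2:F)⁻¹ • (((4:F)⁻¹ • (vecMulVec u' (Pi.single q 1)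
          + u q • vecMulVec (Pi.single j 1) (Pi.single j 1)))
          * vecMulVec (Pi.single q 1) (Pi.single q 1)
        + vecMulVec (Pi.single q 1) (Pi.single q 1)
          * ((4:F)⁻¹ • (vecMulVec u' (Pi.single q 1)
          + u q • vecMulVec (Pi.single j 1) (Pi.single j 1))))
        = (8:F)⁻¹ • vecMulVec v0 (Pi.single q 1) := by
      simp only [Matrix.smul_mul, Matrix.mul_smul, add_mul, mul_add, vmv_mul_vmv,
        hv0, vmv_add_left, vmv_smul_left, dotProduct_single, single_dotProduct,
        Pi.single_eq_same, hsjq, hsqj, one_mul, mul_one, mul_zero, zero_mul, zero_smul,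
        smul_zero, add_zero, zero_add]
      match_scalars <;> (field_simp [h2,h4,h8,h16]; try ring; try simp)
    exact key ▸ hstep _ hhS _
  -- nonvanishing
  have hui : u i = X i j := by simp [hu, Matrix.mulVec, dotProduct_single]
  have huq : u q = X q j := by simp [hu, Matrix.mulVec, dotProduct_single]
  have hwj : w j = X j j := by simp [hw, Matrix.vecMul, single_dotProduct]
  have hu'i : u' i ≠ 0 := by
    rcases eq_or_ne i j with hij | hij
    · subst hij
      have e : u' i = 2 * X i i := by
        simp [hu', hui, hwj, Pi.single_eq_same]; ring
      rw [e]; exact mul_ne_zero h2 hc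
    · have e : u' i = X i j := by
        simp [hu', hui, Pi.single_eq_of_ne hij]
      rw [e]; exact hc
  have hv0i : v0 i ≠ 0 := by
    rcases eq_or_ne i q with hiq | hiq
    · subst hiq
      have e : v0 i = 2 * u' i := by
        simp [hv0, Pi.single_eq_same]; ring
      rw [e]; exact mul_ne_zero h2 hu'i
    · have e : v0 i = u' i := by
        simp [hv0, Pi.single_eq_of_ne hiq]
      rw [e]; exact hu'i
  -- step 4 : single matrix unit
  have hbS : (((16:F)⁻¹ * v0 i) • vecMulVec (Pi.single j 1) (Pi.single q 1) :
      Matrix (Fin n) (Fin n) F) ∈ S := by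
    have key : (2:F)⁻¹ • (((8:F)⁻¹ • vecMulVec v0 (Pi.single q 1))
          * vecMulVec (Pi.single j 1) (Pi.single i 1)
        + vecMulVec (Pi.single j 1) (Pi.single i 1)
          * ((8:F)⁻¹ • vecMulVec v0 (Pi.single q 1)))
        = ((16:F)⁻¹ * v0 i) • vecMulVec (Pi.single j 1) (Pi.single q 1) := by
      simp only [Matrix.smul_mul, Matrix.mul_smul, vmv_mul_vmv, dotProduct_single,
        single_dotProduct, hsqj, one_mul, mul_one, zero_mul, mul_zero, zero_smul,
        smul_zero, add_zero, zero_add]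
      match_scalars <;> (field_simp [h2,h4,h8,h16]; try ring; try simp)
    exact key ▸ hstep _ hrS _
  -- step 5 : diagonal pair
  have hβ : (16:F)⁻¹ * v0 i ≠ 0 := mul_ne_zero (inv_ne_zero h16) hv0i
  refine ⟨(2:F)⁻¹, inv_ne_zero h2, ?_⟩
  have key : (2:F)⁻¹ • ((((16:F)⁻¹ * v0 i) • vecMulVec (Pi.single j 1) (Pi.single q 1))
        * (((16:F)⁻¹ * v0 i)⁻¹ • vecMulVec (Pi.single q 1) (Pi.single j 1))
      + (((16:F)⁻¹ * v0 i)⁻¹ • vecMulVec (Pi.single q 1) (Pi.single j 1))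
        * (((16:F)⁻¹ * v0 i) • vecMulVec (Pi.single j 1) (Pi.single q 1)))
      = (2:F)⁻¹ • (Qm id ({j, q} : Finset (Fin n)) : Matrix (Fin n) (Fin n) F) := by
    have hdisj : Disjoint ({j} : Finset (Fin n)) {q} := by
      simp only [Finset.disjoint_singleton_left, Finset.mem_singleton]
      exact fun h => hqj h.symm
    have hset : ({j} : Finset (Fin n)) ∪ {q} = {j, q} := by
      ext x; simp [Finset.mem_union, Finset.mem_insert]
    rw [← hset, Qm_union hdisj, ← vmv_single_single, ← vmv_single_single]
    simp only [Matrix.smul_mul, Matrix.mul_smul, vmv_mul_vmv, dotProduct_single,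
      single_dotProduct, Pi.single_eq_same, one_mul, mul_one]
    match_scalars <;> (field_simp [h2,h4,h8,h16,hv0i]; try ring; try simp)
  exact key ▸ hstep _ hbS _
end start


end Stmt3Aux

theorem stmt_3 {F : Type*} [Field F] (h2 : (2 : F) ≠ 0) (n : ℕ)
    (X : Matrix (Fin n) (Fin n) F) (hX : X ≠ 0) :
    ⋂₀ {S : Set (Matrix (Fin n) (Fin n) F) |
        (∀ Y, (2 : F)⁻¹ • (X * Y + Y * X) ∈ S) ∧
        (∀ a ∈ S, ∀ Y, (2 : F)⁻¹ • (a * Y + Y * a) ∈ S)} = Set.univ := by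
  classical
  apply Set.eq_univ_iff_forall.mpr
  intro M
  rw [Set.mem_sInter]
  rintro S hS
  obtain ⟨hbase, hstep⟩ := hS
  obtain ⟨i, j, hc⟩ : ∃ i j, X i j ≠ 0 := by
    by_contra h
    push_neg at h
    exact hX (by ext a b; simpa using h a b)
  clear hX
  match n, X, S, hbase, hstep, M, i, j, hc with
  | 0, X, S, hbase, hstep, M, i, j, hc => exact i.elim0
  | 1, X, S, hbase, hstep, M, i, j, hc =>
    have hi : i = 0 := Subsingleton.elim _ _
    have hj : j = 0 := Subsingleton.elim _ _
    rw [hi, hj] at hc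
    have hc00 : X 0 0 ≠ 0 := hc
    have key : (2:F)⁻¹ • (X * ((X 0 0)⁻¹ • M) + ((X 0 0)⁻¹ • M) * X) = M := by
      ext a b
      rw [Subsingleton.elim a 0, Subsingleton.elim b 0]
      simp only [Matrix.smul_apply, Matrix.add_apply, Matrix.mul_apply,
        Fin.sum_univ_one, smul_eq_mul, Matrix.smul_apply]
      field_simp [h2, hc00]
      ring
    exact key ▸ hbase _
  | (m+2), X, S, hbase, hstep, M, i, j, hc =>
    obtain ⟨q, hqj⟩ := exists_ne j
    obtain ⟨γ, hγ0, hγS⟩ := Stmt3Aux.start h2 hbase hstep i j q hc hqj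
    obtain ⟨T', hT'big, γ', hγ'0, hγ'S⟩ :=
      Stmt3Aux.grow h2 hstep (m+2) {j, q} (Finset.insert_nonempty _ _)
        (Nat.sub_le _ _) ⟨γ, hγ0, hγS⟩
    exact Stmt3Aux.finish h2 hstep T' hT'big γ' hγ'0 hγ'S M
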